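/- For every positive integer n and all a, b ∈ ℕ^n, there exists a polynomial p with rational coefficients and degree at most 2^n − 1 such that v_unsplit^{(n,m)}(a,b) = p(m) for every positive integer m. -/

import Mathlib

open scoped BigOperators Classical

namespace GPS

/-! ### Vectors in `ℕ^n`, dominance order, support vectors -/

/-- Partial sum `a 1 + ⋯ + a i` of the first `i` entries of `a ∈ ℕ^n`
(entries indexed by `Fin n`). -/
def psum {n : ℕ} (a : Fin n → ℕ) (i : ℕ) : ℕ :=
  ∑ k : Fin n, if (k : ℕ) < i then a k else 0

/-- `a` dominates `b`: all partial sums of `a` are at least those of `b`. -/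
def Dominates {n : ℕ} (a b : Fin n → ℕ) : Prop :=
  ∀ i : ℕ, psum b i ≤ psum a i

/-- The 0/1 vector `χ(u)` with the same support as `u`. -/
def chi {n : ℕ} (u : Fin n → ℕ) : Fin n → ℕ := fun i => if u i = 0 then 0 else 1

/-- `z(u,w) ≤ z`: `u ⊵ w`, `χ(u) ⊵ χ(w)`, and the zeros of `u` can be matched
injectively to zeros of `w`, each zero position `i` of `u` matched to a zero
position `j` of `w` with `j ≤ i ≤ j + z`.  (This is equivalent to the greedy
matching `M` of the zeros having `i - j ≤ z` for all `(i,j) ∈ M`.)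
In particular `DomZle 1 u w` is the relation `u ⊵₁ w`. -/
def DomZle {n : ℕ} (z : ℕ) (u w : Fin n → ℕ) : Prop :=
  Dominates u w ∧ Dominates (chi u) (chi w) ∧
  ∃ φ : Fin n → Fin n, Set.InjOn φ { i | u i = 0 } ∧
    ∀ i, u i = 0 → w (φ i) = 0 ∧ (φ i : ℕ) ≤ (i : ℕ) ∧ (i : ℕ) ≤ (φ i : ℕ) + z

/-! ### The grid graph `G(n,m)` and its flow polytope -/

/-- Vertices of the graph `G(n,m)`: the grid vertices `(i,j)` for `1 ≤ i ≤ n`,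
`0 ≤ j ≤ m` (encoded as `some (i,j)` with `i : Fin n`, `j : Fin (m+1)`)
together with the sink `s` (encoded as `none`). -/
abbrev Vtx (n m : ℕ) := Option (Fin n × Fin (m + 1))

/-- Edges of `G(n,m)`: horizontal edges `(i,j) → (i,j+1)`, vertical edges
`(i,j) → (i+1,j)`, and the edges `(n,j) → s`. -/
def IsEdge (n m : ℕ) : Vtx n m → Vtx n m → Prop
  | some (i, j), some (i', j') =>
      (i = i' ∧ (j' : ℕ) = (j : ℕ) + 1) ∨ ((i' : ℕ) = (i : ℕ) + 1 ∧ j = j')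
  | some (i, _), none => (i : ℕ) = n - 1
  | none, _ => False

/-- The netflow vector for `F_{G(n,m)}(a,b)`: vertex `(i,0)` has netflow `a i`,
vertex `(i,m)` has netflow `-b i`, interior vertices have netflow `0`, and
the sink has netflow `-∑ (a i - b i)`. -/
noncomputable def netflow (n m : ℕ) (a b : Fin n → ℕ) : Vtx n m → ℝ
  | some (i, j) =>
      (if (j : ℕ) = 0 then (a i : ℝ) else 0) - (if (j : ℕ) = m then (b i : ℝ) else 0)
  | none => -∑ i : Fin n, ((a i : ℝ) - (b i : ℝ))

/-- The flow polytope `F_{G(n,m)}(a,b)`: nonnegative functions on the edges of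
`G(n,m)` (encoded as functions on pairs of vertices vanishing off the edges)
with outflow minus inflow equal to the netflow at every vertex. -/
def FlowPolytope (n m : ℕ) (a b : Fin n → ℕ) : Set (Vtx n m → Vtx n m → ℝ) :=
  { f | (∀ u v, ¬ IsEdge n m u v → f u v = 0) ∧
        (∀ u v, 0 ≤ f u v) ∧
        (∀ u, (∑ v, f u v) - (∑ v, f v u) = netflow n m a b u) }

/-- An integer flow: a flow taking integer values on all edges. -/
def IsIntegerFlow {n m : ℕ} (f : Vtx n m → Vtx n m → ℝ) : Prop :=
  ∀ u v, ∃ z : ℤ, f u v = z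

/-- `x` is an extreme point (vertex) of `P`: `x ∈ P` and `x` is not the midpoint
of two distinct points of `P`. -/
def IsExtremePt {E : Type*} [AddCommGroup E] [Module ℝ E] (P : Set E) (x : E) : Prop :=
  x ∈ P ∧ ∀ y ∈ P, ∀ z ∈ P, x = (2 : ℝ)⁻¹ • (y + z) → y = z

/-- An unsplittable flow: each vertex has at most one outgoing edge with positive
flow, and no vertex with negative netflow has positive flow on an outgoing edge. -/
def IsUnsplittable (n m : ℕ) (a b : Fin n → ℕ) (f : Vtx n m → Vtx n m → ℝ) : Prop :=
  (∀ u v w, 0 < f u v → 0 < f u w → v = w) ∧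
  (∀ u, netflow n m a b u < 0 → ∀ v, f u v = 0)

/-- The number of vertices (extreme points) of `F_{G(n,m)}(a,b)`,
denoted `v^{(n,m)}(a,b)`. -/
noncomputable def numVertices (n m : ℕ) (a b : Fin n → ℕ) : ℕ :=
  Set.ncard { f | IsExtremePt (FlowPolytope n m a b) f }

/-- The number of unsplittable integer flows in `F_{G(n,m)}(a,b)`,
denoted `v_unsplit^{(n,m)}(a,b)`. -/
noncomputable def vUnsplit (n m : ℕ) (a b : Fin n → ℕ) : ℕ :=
  Set.ncard { f | f ∈ FlowPolytope n m a b ∧ IsIntegerFlow f ∧ IsUnsplittable n m a b f }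

end GPS
/-! ### Skew shapes and plane partitions -/

namespace GPS

/-- The partition `λ(a) = (a_1+⋯+a_n, …, a_1+a_2, a_1)`, with rows indexed
`1,…,n` (so `lamOf n a i = a_1 + ⋯ + a_{n+1-i}`). -/
def lamOf (n : ℕ) (a : Fin n → ℕ) : ℕ → ℕ := fun i => psum a (n + 1 - i)

/-- `(i,j)` is a cell of the skew shape `λ/μ` (with `n` rows, rows and columns
indexed from 1): `1 ≤ i ≤ n` and `μ_i < j ≤ λ_i`. -/
def IsCellOf (n : ℕ) (lam mu : ℕ → ℕ) (i j : ℕ) : Prop :=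
  1 ≤ i ∧ i ≤ n ∧ mu i < j ∧ j ≤ lam i

/-- A plane partition of skew shape `λ/μ` with entries in `{0,1,…,m}`:
an array vanishing outside the shape, with entries at most `m`, weakly
decreasing along rows and columns. -/
def IsSkewPP (n m : ℕ) (lam mu : ℕ → ℕ) (π : ℕ → ℕ → ℕ) : Prop :=
  (∀ i j, ¬ IsCellOf n lam mu i j → π i j = 0) ∧
  (∀ i j, IsCellOf n lam mu i j → π i j ≤ m) ∧
  (∀ i j, IsCellOf n lam mu i j → IsCellOf n lam mu i (j + 1) → π i (j + 1) ≤ π i j) ∧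
  (∀ i j, IsCellOf n lam mu i j → IsCellOf n lam mu (i + 1) j → π (i + 1) j ≤ π i j)

/-- The conjugate partition: `conjOf n λ j = #{1 ≤ i ≤ n : λ_i ≥ j}`. -/
def conjOf (n : ℕ) (lam : ℕ → ℕ) (j : ℕ) : ℕ :=
  ((Finset.Icc 1 n).filter fun i => j ≤ lam i).card

/-- A vertex plane partition of shape `λ/μ` with entries at most `m`
(Definition 4.5 of the paper). -/
def IsVertexPP (n m : ℕ) (lam mu : ℕ → ℕ) (π : ℕ → ℕ → ℕ) : Prop :=
  IsSkewPP n m lam mu π ∧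
  ∀ j : ℕ, 1 ≤ j →
    conjOf n mu j < conjOf n lam j → conjOf n mu (j + 1) < conjOf n lam (j + 1) →
    -- (i) `μ'_j = μ'_{j+1}` and `λ'_j = λ'_{j+1}`
    ((conjOf n mu j = conjOf n mu (j + 1) ∧ conjOf n lam j = conjOf n lam (j + 1) →
        ∀ i, π i j = π i (j + 1)) ∧
     -- (ii) `μ'_j = μ'_{j+1}` and `λ'_j > λ'_{j+1}`
     (conjOf n mu j = conjOf n mu (j + 1) ∧ conjOf n lam (j + 1) < conjOf n lam j →
        (∀ i, conjOf n mu (j + 1) + 2 ≤ i → i ≤ conjOf n lam (j + 1) →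
          π i j = π i (j + 1) → π (i - 1) j = π (i - 1) (j + 1)) ∧
        (∀ i, conjOf n mu (j + 1) + 1 ≤ i → i ≤ conjOf n lam (j + 1) →
          π i (j + 1) < π (i + 1) j ∨ π i (j + 1) = π i j)) ∧
     -- (iii) `λ'_j = λ'_{j+1}` and `μ'_j > μ'_{j+1}`
     (conjOf n lam j = conjOf n lam (j + 1) ∧ conjOf n mu (j + 1) < conjOf n mu j →
        (∀ i, conjOf n mu j + 1 ≤ i → i ≤ conjOf n lam j - 1 →
          π i j = π i (j + 1) → π (i + 1) j = π (i + 1) (j + 1)) ∧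
        (∀ i, conjOf n mu j ≤ i → i ≤ conjOf n lam j - 1 →
          π i (j + 1) < π (i + 1) j ∨ π (i + 1) j = π (i + 1) (j + 1))) ∧
     -- (iv) `μ'_j ≠ μ'_{j+1}` and `λ'_j ≠ λ'_{j+1}`
     (conjOf n mu j ≠ conjOf n mu (j + 1) ∧ conjOf n lam j ≠ conjOf n lam (j + 1) →
        ∀ imin imax : ℕ,
          ((IsCellOf n lam mu imin j ∧ IsCellOf n lam mu (imin - 1) (j + 1) ∧
              π imin j ≤ π (imin - 1) (j + 1)) ∧
            (∀ i, (IsCellOf n lam mu i j ∧ IsCellOf n lam mu (i - 1) (j + 1) ∧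
              π i j ≤ π (i - 1) (j + 1)) → imin ≤ i)) →
          ((IsCellOf n lam mu (imax + 1) j ∧ IsCellOf n lam mu imax (j + 1) ∧
              π (imax + 1) j ≤ π imax (j + 1)) ∧
            (∀ i, (IsCellOf n lam mu (i + 1) j ∧ IsCellOf n lam mu i (j + 1) ∧
              π (i + 1) j ≤ π i (j + 1)) → i ≤ imax)) →
          imin < imax → ∀ i, imin ≤ i → i ≤ imax → π i j = π i (j + 1)))

end GPS
/-! ### The graph `H_⊤(n)`, the matrix `A_n`, and general flow polytopes -/

namespace GPS

/-- Vertices of `H_⊤(n)`: `(i,-1), (i,0), (i,1)` for `1 ≤ i ≤ n` (encoded as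
`some (i,j)` with `j : Fin 3` standing for levels `-1, 0, 1`) and a sink `s`
(encoded as `none`). -/
abbrev HVtx (n : ℕ) := Option (Fin n × Fin 3)

/-- Edges of `H_⊤(n)`: `(i,-1) → (i,0)`, `(i,0) → (i,1)`, `(i,0) → (i+1,0)`,
and `(n,0) → s`. -/
def HIsEdge (n : ℕ) : HVtx n → HVtx n → Prop
  | some (i, j), some (i', j') =>
      (i = i' ∧ (j' : ℕ) = (j : ℕ) + 1) ∨
      ((j : ℕ) = 1 ∧ (j' : ℕ) = 1 ∧ (i' : ℕ) = (i : ℕ) + 1)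
  | some (i, j), none => (j : ℕ) = 1 ∧ (i : ℕ) = n - 1
  | none, _ => False

/-- The netflows for `F_{H_⊤(n)}(a,b)`: `(i,-1)` has netflow `a i`, `(i,1)` has
netflow `-b i`, `(i,0)` has netflow `0`, and the sink has `-∑ (a i - b i)`. -/
noncomputable def Hnetflow (n : ℕ) (a b : Fin n → ℕ) : HVtx n → ℝ
  | some (i, j) =>
      (if (j : ℕ) = 0 then (a i : ℝ) else 0) - (if (j : ℕ) = 2 then (b i : ℝ) else 0)
  | none => -∑ i : Fin n, ((a i : ℝ) - (b i : ℝ))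

/-- The flow polytope `F_{H_⊤(n)}(a,b)`. -/
def FHtop (n : ℕ) (a b : Fin n → ℕ) : Set (HVtx n → HVtx n → ℝ) :=
  { f | (∀ u v, ¬ HIsEdge n u v → f u v = 0) ∧
        (∀ u v, 0 ≤ f u v) ∧
        (∀ u, (∑ v, f u v) - (∑ v, f v u) = Hnetflow n a b u) }

/-- An unsplittable flow on `H_⊤(n)`. -/
def HUnsplittable (n : ℕ) (a b : Fin n → ℕ) (f : HVtx n → HVtx n → ℝ) : Prop :=
  (∀ u v w, 0 < f u v → 0 < f u w → v = w) ∧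
  (∀ u, Hnetflow n a b u < 0 → ∀ v, f u v = 0)

/-- The `2^n × 2^n` matrix `A_n`, with rows and columns indexed by `{0,1}^n`,
whose `(j,k)` entry is `1` if `j ⊵₁ k` and `0` otherwise. -/
noncomputable def An (n : ℕ) : Matrix (Fin n → Fin 2) (Fin n → Fin 2) ℤ :=
  Matrix.of fun j k =>
    if DomZle 1 (fun i => (j i : ℕ)) (fun i => (k i : ℕ)) then 1 else 0

/-- The support vector `χ(u)` as an element of `{0,1}^n` (encoded `Fin n → Fin 2`). -/
def chi2 {n : ℕ} (u : Fin n → ℕ) : Fin n → Fin 2 := fun i => if u i = 0 then 0 else 1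

/-- The flow polytope `F_G(c)` of a directed graph on vertex set `Fin (N+1)`
with edge relation `E` and netflow vector `c`. -/
def FlowPolyGen (N : ℕ) (E : Fin (N + 1) → Fin (N + 1) → Prop)
    (c : Fin (N + 1) → ℤ) : Set (Fin (N + 1) → Fin (N + 1) → ℝ) :=
  { f | (∀ u v, ¬ E u v → f u v = 0) ∧
        (∀ u v, 0 ≤ f u v) ∧
        (∀ u, (∑ v, f u v) - (∑ v, f v u) = (c u : ℝ)) }

end GPS
namespace GPS

namespace Aux

variable {n : ℕ}

theorem psum_zero (u : Fin n → ℕ) : psum u 0 = 0 := by simp [psum]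

theorem psum_succ (u : Fin n → ℕ) {i : ℕ} (h : i < n) :
    psum u (i + 1) = psum u i + u ⟨i, h⟩ := by
  have h2 : u ⟨i, h⟩ = ∑ k : Fin n, if k = ⟨i, h⟩ then u k else 0 := by
    rw [Finset.sum_ite_eq' Finset.univ ⟨i, h⟩ u]; simp
  rw [psum, psum, h2, ← Finset.sum_add_distrib]
  refine Finset.sum_congr rfl fun k _ => ?_
  by_cases hk : k = ⟨i, h⟩
  · subst hk; simp
  · have : (k : ℕ) ≠ i := fun hc => hk (Fin.ext hc)
    by_cases hk2 : (k : ℕ) < i <;> simp [hk, hk2] <;> omega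

theorem psum_stab (u : Fin n → ℕ) {i : ℕ} (h : n ≤ i) : psum u i = psum u n := by
  unfold psum
  refine Finset.sum_congr rfl fun k _ => ?_
  have := k.isLt
  simp [Nat.lt_of_lt_of_le k.isLt h, k.isLt]

theorem psum_mono (u : Fin n → ℕ) {i j : ℕ} (h : i ≤ j) : psum u i ≤ psum u j := by
  refine Finset.sum_le_sum fun k _ => ?_
  split_ifs with h1 h2 <;> omega

theorem psum_total (u : Fin n → ℕ) : psum u n = ∑ k, u k := by
  unfold psum
  exact Finset.sum_congr rfl fun k _ => by simp [k.isLt]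

/-- The transition relation between consecutive column inputs. -/
def T (x y : Fin n → ℕ) : Prop :=
  (∀ i : ℕ, psum y i ≤ psum x i) ∧
  ∀ i : Fin n, y i ≠ 0 → psum y ((i : ℕ) + 1) = psum x ((i : ℕ) + 1)

theorem T_refl (x : Fin n → ℕ) : T x x := ⟨fun _ => le_rfl, fun _ _ => rfl⟩

theorem T_chi (x y : Fin n → ℕ) (h : T x y) (i : ℕ) :
    psum (chi y) i ≤ psum (chi x) i ∧
      (psum y i = psum x i ∨ psum (chi y) i < psum (chi x) i) := by
  induction i with
  | zero => simp [psum_zero]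
  | succ i ih =>
    by_cases hi : i < n
    · rw [psum_succ (chi y) hi, psum_succ (chi x) hi, psum_succ y hi, psum_succ x hi]
      by_cases hy : y ⟨i, hi⟩ = 0
      · by_cases hx : x ⟨i, hi⟩ = 0
        · constructor
          · simp [chi, hx, hy]; exact ih.1
          · rcases ih.2 with h1 | h1
            · left; simp [hx, hy, h1]
            · right; simpa [chi, hx, hy] using h1
        · constructor
          · simp [chi, hx, hy]; omega
          · right
            have h1 : psum (chi y) i ≤ psum (chi x) i := ih.1
            simp [chi, hx, hy]; omega
      · have he : psum y (i + 1) = psum x (i + 1) := h.2 ⟨i, hi⟩ hy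
        rw [psum_succ y hi, psum_succ x hi] at he
        constructor
        · by_cases hx : x ⟨i, hi⟩ = 0
          · have : psum y i ≤ psum x i := h.1 i
            have hlt : psum (chi y) i < psum (chi x) i := by
              rcases ih.2 with h1 | h1
              · exfalso; omega
              · exact h1
            simp [chi, hx, hy]; omega
          · simp only [chi, if_neg hx, if_neg hy, psum_succ _ hi]
            exact Nat.add_le_add ih.1 le_rfl
        · left; exact he
    · push_neg at hi
      rw [psum_stab y (by omega), psum_stab x (by omega), psum_stab (chi y) (by omega),
        psum_stab (chi x) (by omega), ← psum_stab y hi, ← psum_stab x hi,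
        ← psum_stab (chi y) hi, ← psum_stab (chi x) hi]
      exact ih

theorem T_chi_dom (x y : Fin n → ℕ) (h : T x y) (i : ℕ) :
    psum (chi y) i ≤ psum (chi x) i := (T_chi x y h i).1

theorem eq_of_psum_eq (x y : Fin n → ℕ) (h : ∀ i : ℕ, psum y i = psum x i) : x = y := by
  funext k
  have h1 := h (k : ℕ)
  have h2 := h ((k : ℕ) + 1)
  rw [psum_succ y k.isLt, psum_succ x k.isLt] at h2
  simp only [Fin.eta] at h2
  omega

theorem T_eq_of_chi_eq (x y : Fin n → ℕ) (h : T x y) (hc : chi x = chi y) : x = y := by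
  refine eq_of_psum_eq x y fun i => ?_
  induction i with
  | zero => simp [psum_zero]
  | succ i ih =>
    by_cases hi : i < n
    · rw [psum_succ y hi, psum_succ x hi]
      by_cases hy : y ⟨i, hi⟩ = 0
      · have hx : x ⟨i, hi⟩ = 0 := by
          have := congrFun hc ⟨i, hi⟩
          simp [chi, hy] at this
          by_contra hxx; simp [hxx] at this
        rw [hy, hx, ih]
      · have := h.2 ⟨i, hi⟩ hy
        rw [psum_succ y hi, psum_succ x hi] at this
        exact this
    · rw [psum_stab y (by omega), psum_stab x (by omega), ← psum_stab y (le_of_not_gt hi),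
        ← psum_stab x (le_of_not_gt hi)]
      exact ih

/-- Cumulative partial-sum reconstruction from a support vector. -/
def cum (x : Fin n → ℕ) (w : Fin n → Fin 2) : ℕ → ℕ
  | 0 => 0
  | i + 1 => if h : i < n then (if w ⟨i, h⟩ = 1 then psum x (i + 1) else cum x w i) else cum x w i

/-- The unique candidate `y` with `T x y` and support `w`. -/
def recon2 (x : Fin n → ℕ) (w : Fin n → Fin 2) : Fin n → ℕ :=
  fun i => cum x w ((i : ℕ) + 1) - cum x w (i : ℕ)

theorem cum_eq (x y : Fin n → ℕ) (h : T x y) : ∀ i, cum x (chi2 y) i = psum y i := by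
  intro i
  induction i with
  | zero => simp [cum, psum_zero]
  | succ i ih =>
    by_cases hi : i < n
    · by_cases hy : y ⟨i, hi⟩ = 0
      · have hw : chi2 y ⟨i, hi⟩ ≠ 1 := by simp [chi2, hy]
        simp only [cum, dif_pos hi, if_neg hw, ih, psum_succ y hi, hy, Nat.add_zero]
      · have hw : chi2 y ⟨i, hi⟩ = 1 := by simp [chi2, hy]
        simp only [cum, dif_pos hi, if_pos hw]
        exact (h.2 ⟨i, hi⟩ hy).symm
    · simp only [cum, dif_neg hi, ih]
      rw [psum_stab y (le_of_not_gt hi), ← psum_stab y (Nat.le_succ_of_le (le_of_not_gt hi))]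

theorem recon2_eq (x y : Fin n → ℕ) (h : T x y) : recon2 x (chi2 y) = y := by
  funext k
  unfold recon2
  rw [cum_eq x y h, cum_eq x y h, psum_succ y k.isLt]
  simp

/-- Possible successors of `x` under `T`. -/
noncomputable def succs (x : Fin n → ℕ) : Finset (Fin n → ℕ) :=
  Finset.image (recon2 x) Finset.univ

theorem mem_succs {x y : Fin n → ℕ} (h : T x y) : y ∈ succs x := by
  rw [← recon2_eq x y h]; exact Finset.mem_image_of_mem _ (Finset.mem_univ _)

theorem self_mem_succs (x : Fin n → ℕ) : x ∈ succs x := mem_succs (T_refl x)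

/-- Rank function: size of the dominance down-set of the support of `x`. -/
noncomputable def rk (x : Fin n → ℕ) : ℕ :=
  (Finset.univ.filter fun w : Fin n → Fin 2 =>
    ∀ i : ℕ, psum (fun k => (w k : ℕ)) i ≤ psum (chi x) i).card

theorem chi2_cast (x : Fin n → ℕ) : (fun k => ((chi2 x k : ℕ))) = chi x := by
  funext k; by_cases h : x k = 0 <;> simp [chi, chi2, h]

theorem chi2_mem (x : Fin n → ℕ) : chi2 x ∈ (Finset.univ.filter fun w : Fin n → Fin 2 =>
    ∀ i : ℕ, psum (fun k => (w k : ℕ)) i ≤ psum (chi x) i) := by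
  rw [Finset.mem_filter]
  exact ⟨Finset.mem_univ _, by rw [chi2_cast]; exact fun _ => le_rfl⟩

theorem rk_pos (x : Fin n → ℕ) : 1 ≤ rk x :=
  Finset.card_pos.2 ⟨chi2 x, chi2_mem x⟩

theorem rk_le (x : Fin n → ℕ) : rk x ≤ 2 ^ n := by
  calc rk x ≤ Finset.univ.card := Finset.card_filter_le _ _
  _ = 2 ^ n := by simp

theorem rk_lt (x y : Fin n → ℕ) (h : T x y) (hne : x ≠ y) : rk y < rk x := by
  apply Finset.card_lt_card
  constructor
  · intro w hw
    rw [Finset.mem_filter] at hw ⊢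
    exact ⟨hw.1, fun i => le_trans (hw.2 i) (T_chi_dom x y h i)⟩
  · intro hsub
    have h1 := hsub (chi2_mem x)
    rw [Finset.mem_filter, chi2_cast] at h1
    have h2 : ∀ i, psum (chi x) i = psum (chi y) i :=
      fun i => le_antisymm (h1.2 i) (T_chi_dom x y h i)
    have h3 : chi x = chi y := (eq_of_psum_eq (chi y) (chi x) h2).symm
    exact hne (T_eq_of_chi_eq x y h h3)

variable (a : Fin n → ℕ)

/-- Sets reachable from `a` in at most `k` steps. -/
noncomputable def FF : ℕ → Finset (Fin n → ℕ)
  | 0 => {a}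
  | k + 1 => (FF k).biUnion succs

theorem FF_mono : ∀ k, FF a k ⊆ FF a (k + 1) := by
  intro k
  induction k with
  | zero =>
    intro x hx
    simp only [FF] at hx ⊢
    rw [Finset.mem_singleton] at hx
    subst hx
    exact Finset.mem_biUnion.2 ⟨x, Finset.mem_singleton_self x, self_mem_succs x⟩
  | succ k ih => exact Finset.biUnion_subset_biUnion_of_subset_left succs ih

theorem FF_le {k l : ℕ} (h : k ≤ l) : FF a k ⊆ FF a l := by
  induction l with
  | zero => rw [Nat.le_zero.1 h]
  | succ l ih =>
    rcases Nat.lt_or_ge k (l + 1) with h1 | h1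
    · exact (ih (by omega)).trans (FF_mono a l)
    · have : k = l + 1 := by omega
      rw [this]

/-- The ambient finite state space. -/
noncomputable def SS : Finset (Fin n → ℕ) := FF a (2 ^ n)

theorem a_mem_SS : a ∈ SS a :=
  FF_le a (Nat.zero_le _) (Finset.mem_singleton_self a)

theorem chain_mem_SS (c : ℕ → Fin n → ℕ) (h0 : c 0 = a) (hT : ∀ j, T (c j) (c (j + 1))) :
    ∀ j, c j ∈ SS a := by
  have key : ∀ j, ∃ k, c j ∈ FF a k ∧ k + rk (c j) ≤ 2 ^ n := by
    intro j
    induction j with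
    | zero =>
      refine ⟨0, ?_, ?_⟩
      · rw [h0]; exact Finset.mem_singleton_self a
      · have := rk_le (c 0); omega
    | succ j ih =>
      obtain ⟨k, hk1, hk2⟩ := ih
      by_cases he : c (j + 1) = c j
      · exact ⟨k, by rw [he]; exact hk1, by rw [he]; exact hk2⟩
      · refine ⟨k + 1, Finset.mem_biUnion.2 ⟨c j, hk1, mem_succs (hT j)⟩, ?_⟩
        have := rk_lt (c j) (c (j + 1)) (hT j) (Ne.symm he)
        omega
  intro j
  obtain ⟨k, hk1, hk2⟩ := key j
  have := rk_pos (c j)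
  exact FF_le a (by omega) hk1

/-- `T`-chains from `a` of length `L`, padded to be eventually equal to `y`. -/
def Chains (L : ℕ) (y : Fin n → ℕ) : Set (ℕ → Fin n → ℕ) :=
  {c | c 0 = a ∧ (∀ j, T (c j) (c (j + 1))) ∧ ∀ j, L ≤ j → c j = y}

/-- The transfer matrix. -/
noncomputable def TM : Matrix (SS a) (SS a) ℚ :=
  Matrix.of fun x y => if T x.1 y.1 then 1 else 0

theorem chains_card :
    ∀ (L : ℕ) (y : Fin n → ℕ) (hy : y ∈ SS a), (Chains a L y).Finite ∧
      ((Chains a L y).ncard : ℚ) = (TM a ^ L) ⟨a, a_mem_SS a⟩ ⟨y, hy⟩ := by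
  intro L
  induction L with
  | zero =>
    intro y hy
    by_cases hay : y = a
    · have hset : Chains a 0 y = {fun _ => y} := by
        ext c
        constructor
        · rintro ⟨h0, hT, hp⟩
          funext j
          exact hp j (Nat.zero_le j)
        · rintro rfl
          exact ⟨hay, fun j => T_refl y, fun j _ => rfl⟩
      rw [hset]
      refine ⟨Set.finite_singleton _, ?_⟩
      rw [Set.ncard_singleton, pow_zero, Matrix.one_apply,
        if_pos (Subtype.ext hay.symm)]
      norm_num
    · have hset : Chains a 0 y = ∅ := by
        ext c
        simp only [Set.mem_empty_iff_false, iff_false]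
        rintro ⟨h0, hT, hp⟩
        exact hay ((hp 0 le_rfl).symm.trans h0)
      rw [hset]
      refine ⟨Set.finite_empty, ?_⟩
      rw [Set.ncard_empty, pow_zero, Matrix.one_apply_ne]
      · norm_num
      · intro hc
        exact hay (congrArg Subtype.val hc).symm
  | succ L IH =>
    intro y hy
    classical
    set ext_ : (ℕ → Fin n → ℕ) → (ℕ → Fin n → ℕ) :=
      fun d => fun j => if j ≤ L then d j else y with hext
    set trunc : (ℕ → Fin n → ℕ) → (ℕ → Fin n → ℕ) :=
      fun c => fun j => if j ≤ L then c j else c L with htrunc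
    have claimA : ∀ c ∈ Chains a (L + 1) y,
        c L ∈ SS a ∧ trunc c ∈ Chains a L (c L) ∧ c = ext_ (trunc c) := by
      rintro c ⟨h0, hT, hp⟩
      have htr : ∀ j, L ≤ j → trunc c j = c L := by
        intro j hj
        by_cases hj2 : j ≤ L
        · have : j = L := le_antisymm hj2 hj
          simp [htrunc, this]
        · simp [htrunc, hj2]
      refine ⟨chain_mem_SS a c h0 hT L, ⟨?_, ?_, htr⟩, ?_⟩
      · simpa [htrunc] using h0
      · intro j
        by_cases hj : j + 1 ≤ L
        · have hj1 : j ≤ L := by omega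
          simp only [htrunc, if_pos hj, if_pos hj1]
          exact hT j
        · by_cases hj2 : j ≤ L
          · have hjL : j = L := by omega
            rw [htr j (by omega), htr (j+1) (by omega)]
            exact T_refl _
          · rw [htr j (by omega), htr (j+1) (by omega)]
            exact T_refl _
      · funext j
        by_cases hj : j ≤ L
        · simp [hext, htrunc, hj]
        · simp only [hext, htrunc, if_neg hj]
          exact hp j (by omega)
    have claimB : ∀ (x : Fin n → ℕ), T x y → ∀ d ∈ Chains a L x,
        ext_ d ∈ Chains a (L + 1) y ∧ ext_ d L = x := by
      rintro x hTxy d ⟨h0, hT, hp⟩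
      have hdL : ext_ d L = x := by simp [hext]; exact hp L le_rfl
      refine ⟨⟨?_, ?_, ?_⟩, hdL⟩
      · simpa [hext] using h0
      · intro j
        by_cases hj : j + 1 ≤ L
        · simp only [hext, if_pos hj, if_pos (by omega : j ≤ L)]
          exact hT j
        · by_cases hj2 : j ≤ L
          · have hjL : j = L := by omega
            subst hjL
            rw [hdL]
            simp only [hext, if_neg hj]
            exact hTxy
          · simp only [hext, if_neg hj, if_neg hj2]
            exact T_refl y
      · intro j hj
        simp only [hext]
        rw [if_neg (by omega : ¬ j ≤ L)]
    have hfin : (Chains a (L + 1) y).Finite := by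
      have hsub : Chains a (L + 1) y ⊆
          ⋃ x ∈ (SS a : Set (Fin n → ℕ)), ext_ '' Chains a L x := by
        intro c hc
        obtain ⟨hc1, hc2, hc3⟩ := claimA c hc
        exact Set.mem_biUnion hc1 ⟨trunc c, hc2, hc3.symm⟩
      exact Set.Finite.subset (Set.Finite.biUnion (SS a).finite_toSet
        (fun x hx => Set.Finite.image _ (IH x hx).1)) hsub
    refine ⟨hfin, ?_⟩
    have hcg : ∀ c ∈ hfin.toFinset, c L ∈ SS a := by
      intro c hc
      exact (claimA c (hfin.mem_toFinset.1 hc)).1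
    have hcard := Finset.card_eq_sum_card_fiberwise hcg
    rw [Set.ncard_eq_toFinset_card _ hfin, hcard]
    rw [pow_succ, Matrix.mul_apply, Finset.univ_eq_attach]
    push_cast
    rw [← Finset.sum_attach (SS a)
      (fun v => ((hfin.toFinset.filter fun c => c L = v).card : ℚ))]
    refine Finset.sum_congr rfl fun x _ => ?_
    by_cases hTxy : T x.1 y
    · have hTMe : TM a x ⟨y, hy⟩ = 1 := by simp [TM, hTxy]
      rw [hTMe, mul_one]
      have hbij : (hfin.toFinset.filter fun c => c L = x.1).card
          = ((IH x.1 x.2).1.toFinset).card := by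
        refine Finset.card_bij' (fun c _ => trunc c) (fun d _ => ext_ d) ?_ ?_ ?_ ?_
        · intro c hc
          rw [Finset.mem_filter] at hc
          obtain ⟨hc1, hc2⟩ := hc
          rw [Set.Finite.mem_toFinset]
          have := (claimA c (hfin.mem_toFinset.1 hc1)).2.1
          rwa [hc2] at this
        · intro d hd
          rw [Set.Finite.mem_toFinset] at hd
          rw [Finset.mem_filter, hfin.mem_toFinset]
          exact ⟨(claimB x.1 hTxy d hd).1, (claimB x.1 hTxy d hd).2⟩
        · intro c hc
          rw [Finset.mem_filter] at hc
          exact ((claimA c (hfin.mem_toFinset.1 hc.1)).2.2).symm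
        · intro d hd
          rw [Set.Finite.mem_toFinset] at hd
          obtain ⟨h0, hT, hp⟩ := hd
          funext j
          by_cases hj : j ≤ L
          · simp [htrunc, hext, hj]
          · have h2 : d j = x.1 := hp j (le_of_not_ge hj)
            have h1 : d L = x.1 := hp L le_rfl
            simp [htrunc, hext, if_neg hj, h1, h2]
      rw [hbij]
      have := (IH x.1 x.2).2
      rw [Set.ncard_eq_toFinset_card _ (IH x.1 x.2).1] at this
      exact this
    · have hTMe : TM a x ⟨y, hy⟩ = 0 := by simp [TM, hTxy]
      rw [hTMe, mul_zero]
      have : (hfin.toFinset.filter fun c => c L = x.1) = ∅ := by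
        refine Finset.eq_empty_of_forall_notMem fun c hc => ?_
        rw [Finset.mem_filter, hfin.mem_toFinset] at hc
        obtain ⟨⟨h0, hT, hp⟩, hcL⟩ := hc
        have := hT L
        rw [hcL, hp (L + 1) le_rfl] at this
        exact hTxy this
      rw [this]
      norm_num

/-- The strictly-triangular part of the transfer matrix. -/
noncomputable def NM : Matrix (SS a) (SS a) ℚ := TM a - 1

theorem NM_apply {x y : (SS a : Finset (Fin n → ℕ))} (h : NM a x y ≠ 0) :
    rk y.1 < rk x.1 := by
  by_cases hxy : x = y
  · exfalso
    apply h
    subst hxy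
    simp [NM, TM, Matrix.sub_apply, Matrix.one_apply_eq, T_refl]
  · have h1 : (1 : Matrix (SS a) (SS a) ℚ) x y = 0 := Matrix.one_apply_ne hxy
    have h2 : NM a x y = TM a x y := by simp [NM, Matrix.sub_apply, h1]
    rw [h2] at h
    have hT : T x.1 y.1 := by
      by_contra hT
      exact h (by simp [TM, hT])
    exact rk_lt x.1 y.1 hT (fun hc => hxy (Subtype.ext hc))

theorem NM_pow (k : ℕ) : ∀ x y : (SS a : Finset (Fin n → ℕ)),
    (NM a ^ k) x y ≠ 0 → rk y.1 + k ≤ rk x.1 := by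
  induction k with
  | zero =>
    intro x y h
    rw [pow_zero] at h
    by_cases hxy : x = y
    · subst hxy; omega
    · exact absurd (Matrix.one_apply_ne hxy) h
  | succ k ih =>
    intro x y h
    rw [pow_succ, Matrix.mul_apply] at h
    obtain ⟨w, -, hw⟩ := Finset.exists_ne_zero_of_sum_ne_zero h
    have h1 := ih x w (left_ne_zero_of_mul hw)
    have h2 := NM_apply a (right_ne_zero_of_mul hw)
    omega

theorem NM_pow_zero {k : ℕ} (hk : 2 ^ n ≤ k) (x y : (SS a : Finset (Fin n → ℕ))) :
    (NM a ^ k) x y = 0 := by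
  by_contra h
  have h1 := NM_pow a k x y h
  have h2 := rk_le (x.1)
  have h3 := rk_pos (y.1)
  omega

theorem TM_pow_entry (L : ℕ) (x y : (SS a : Finset (Fin n → ℕ))) :
    (TM a ^ L) x y = ∑ k ∈ Finset.range (2 ^ n), (NM a ^ k) x y * (L.choose k : ℚ) := by
  have hTM : TM a = NM a + 1 := by simp [NM]
  have hcomm : Commute (NM a) (1 : Matrix (SS a) (SS a) ℚ) := Commute.one_right _
  rw [hTM, hcomm.add_pow]
  have hentry : (∑ k ∈ Finset.range (L + 1),
      NM a ^ k * 1 ^ (L - k) * (L.choose k : Matrix (SS a) (SS a) ℚ)) x y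
      = ∑ k ∈ Finset.range (L + 1), (NM a ^ k) x y * (L.choose k : ℚ) := by
    rw [Matrix.sum_apply]
    refine Finset.sum_congr rfl fun k _ => ?_
    rw [one_pow, mul_one]
    have : (L.choose k : Matrix (SS a) (SS a) ℚ) = (L.choose k : ℚ) • 1 := by
      rw [Matrix.smul_one_eq_diagonal, ← Matrix.diagonal_natCast]
    rw [this]
    simp [Matrix.mul_smul, Matrix.smul_apply, mul_comm]
  rw [hentry]
  rcases le_total (L + 1) (2 ^ n) with hle | hle
  · refine Finset.sum_subset (Finset.range_subset_range.2 hle) fun k hk1 hk2 => ?_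
    rw [Finset.mem_range] at hk1
    rw [Finset.mem_range, not_lt] at hk2
    rw [Nat.choose_eq_zero_of_lt (by omega)]
    norm_num
  · refine (Finset.sum_subset (Finset.range_subset_range.2 hle) fun k hk1 hk2 => ?_).symm
    rw [Finset.mem_range, not_lt] at hk2
    rw [NM_pow_zero a hk2, zero_mul]

theorem chains_poly (b : Fin n → ℕ) :
    ∃ p : Polynomial ℚ, p.natDegree ≤ 2 ^ n - 1 ∧
      ∀ L : ℕ, ((Chains a L b).ncard : ℚ) = p.eval (L : ℚ) := by
  by_cases hb : b ∈ SS a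
  · refine ⟨∑ k ∈ Finset.range (2 ^ n),
      Polynomial.C ((NM a ^ k) ⟨a, a_mem_SS a⟩ ⟨b, hb⟩ / k.factorial) * descPochhammer ℚ k,
      ?_, ?_⟩
    · refine Polynomial.natDegree_sum_le_of_forall_le _ _ fun k hk => ?_
      refine le_trans (Polynomial.natDegree_C_mul_le _ _) ?_
      rw [descPochhammer_natDegree]
      rw [Finset.mem_range] at hk
      have : 0 < 2 ^ n := Nat.pow_pos (by norm_num)
      omega
    · intro L
      rw [(chains_card a L b hb).2, TM_pow_entry]
      rw [Polynomial.eval_finset_sum]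
      refine Finset.sum_congr rfl fun k _ => ?_
      rw [Polynomial.eval_mul, Polynomial.eval_C,
        descPochhammer_eval_eq_descFactorial ℚ L k]
      rw [Nat.descFactorial_eq_factorial_mul_choose]
      push_cast
      field_simp
  · refine ⟨0, by simp, fun L => ?_⟩
    have : Chains a L b = ∅ := by
      ext c
      simp only [Set.mem_empty_iff_false, iff_false]
      rintro ⟨h0, hT, hp⟩
      have := chain_mem_SS a c h0 hT L
      rw [hp L le_rfl] at this
      exact hb this
    rw [this]
    simp

section Flow

variable {m : ℕ}

/-- The downward target of `(i,j)`: the vertex below, or the sink. -/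
def vtar (i : Fin n) (j : Fin (m + 1)) : Vtx n m :=
  if h : (i : ℕ) + 1 < n then some (⟨(i : ℕ) + 1, h⟩, j) else none

/-- The vertical/sink flow value out of row `i` between columns `j` and `j+1`. -/
noncomputable def dval (c : ℕ → Fin n → ℕ) (i : Fin n) (j : ℕ) : ℝ :=
  (psum (c j) ((i : ℕ) + 1) : ℝ) - (psum (c (j + 1)) ((i : ℕ) + 1) : ℝ)

/-- The flow associated to a chain of column vectors. -/
noncomputable def Psi (c : ℕ → Fin n → ℕ) : Vtx n m → Vtx n m → ℝ := fun u v =>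
  match u with
  | none => 0
  | some (i, j) =>
      (if ∃ h : (j : ℕ) + 1 < m + 1, v = some (i, ⟨(j : ℕ) + 1, h⟩) then
        (c ((j : ℕ) + 1) i : ℝ) else 0)
      + (if v = vtar i j then dval c i (j : ℕ) else 0)

theorem htar_ne_vtar (i : Fin n) (j : Fin (m + 1)) (h : (j : ℕ) + 1 < m + 1) :
    (some (i, ⟨(j : ℕ) + 1, h⟩) : Vtx n m) ≠ vtar i j := by
  unfold vtar
  split_ifs with h1
  · intro hc
    rw [Option.some.injEq, Prod.mk.injEq] at hc
    have h3 := congrArg Fin.val hc.1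
    simp at h3
  · exact Option.some_ne_none _

theorem isEdge_htar (i : Fin n) (j : Fin (m + 1)) (h : (j : ℕ) + 1 < m + 1) :
    IsEdge n m (some (i, j)) (some (i, ⟨(j : ℕ) + 1, h⟩)) := Or.inl ⟨rfl, rfl⟩

theorem isEdge_vtar (i : Fin n) (j : Fin (m + 1)) :
    IsEdge n m (some (i, j)) (vtar i j) := by
  unfold vtar
  split_ifs with h1
  · exact Or.inr ⟨rfl, rfl⟩
  · show (i : ℕ) = n - 1
    have := i.isLt
    omega

theorem edge_dest {i : Fin n} {j : Fin (m + 1)} {v : Vtx n m}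
    (h : IsEdge n m (some (i, j)) v) :
    (∃ h' : (j : ℕ) + 1 < m + 1, v = some (i, ⟨(j : ℕ) + 1, h'⟩)) ∨ v = vtar i j := by
  match v with
  | some (i', j') =>
    rcases h with ⟨h1, h2⟩ | ⟨h1, h2⟩
    · left
      refine ⟨by rw [← h2]; exact j'.isLt, ?_⟩
      simp only [Option.some.injEq, Prod.mk.injEq]
      exact ⟨h1.symm, Fin.ext h2⟩
    · right
      unfold vtar
      rw [dif_pos (by rw [← h1]; exact i'.isLt)]
      simp only [Option.some.injEq, Prod.mk.injEq]
      exact ⟨Fin.ext h1, h2.symm⟩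
  | none =>
    right
    unfold vtar
    rw [dif_neg (by have := i.isLt; change (i : ℕ) = n - 1 at h; omega)]

theorem edge_src {i : Fin n} {j : Fin (m + 1)} {v : Vtx n m}
    (h : IsEdge n m v (some (i, j))) :
    (∃ _ : 0 < (j : ℕ), v = some (i, ⟨(j : ℕ) - 1, lt_of_le_of_lt (Nat.sub_le _ _) j.isLt⟩)) ∨
    (∃ h' : 0 < (i : ℕ), v = some (⟨(i : ℕ) - 1, by have := i.isLt; omega⟩, j)) := by
  match v with
  | some (i', j') =>
    rcases h with ⟨h1, h2⟩ | ⟨h1, h2⟩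
    · left
      refine ⟨by omega, ?_⟩
      simp only [Option.some.injEq, Prod.mk.injEq]
      exact ⟨h1, Fin.ext (show (j' : ℕ) = (j : ℕ) - 1 by omega)⟩
    · right
      refine ⟨by omega, ?_⟩
      simp only [Option.some.injEq, Prod.mk.injEq]
      exact ⟨Fin.ext (show (i' : ℕ) = (i : ℕ) - 1 by omega), h2⟩
  | none => exact absurd h (by simp [IsEdge])

variable {f : Vtx n m → Vtx n m → ℝ}

theorem sum_out (hz : ∀ u v, ¬ IsEdge n m u v → f u v = 0) (i : Fin n) (j : Fin (m + 1)) :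
    ∑ v, f (some (i, j)) v =
      (if h : (j : ℕ) + 1 < m + 1 then f (some (i, j)) (some (i, ⟨(j : ℕ) + 1, h⟩)) else 0)
        + f (some (i, j)) (vtar i j) := by
  by_cases h : (j : ℕ) + 1 < m + 1
  · rw [dif_pos h]
    have key : ∀ v, f (some (i, j)) v =
        (if v = some (i, ⟨(j : ℕ) + 1, h⟩) then f (some (i, j)) (some (i, ⟨(j : ℕ) + 1, h⟩)) else 0)
        + (if v = vtar i j then f (some (i, j)) (vtar i j) else 0) := by
      intro v
      by_cases hv1 : v = some (i, ⟨(j : ℕ) + 1, h⟩)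
      · rw [if_pos hv1, if_neg (by rw [hv1]; exact htar_ne_vtar i j h), hv1, add_zero]
      · rw [if_neg hv1]
        by_cases hv2 : v = vtar i j
        · rw [if_pos hv2, hv2, zero_add]
        · rw [if_neg hv2, add_zero]
          refine hz _ _ fun he => ?_
          rcases edge_dest he with ⟨h', rfl⟩ | h'
          · exact hv1 rfl
          · exact hv2 h'
    rw [Finset.sum_congr rfl fun v _ => key v, Finset.sum_add_distrib,
      Finset.sum_ite_eq' Finset.univ, Finset.sum_ite_eq' Finset.univ,
      if_pos (Finset.mem_univ _), if_pos (Finset.mem_univ _)]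
  · rw [dif_neg h]
    have key : ∀ v, f (some (i, j)) v =
        (if v = vtar i j then f (some (i, j)) (vtar i j) else 0) := by
      intro v
      by_cases hv2 : v = vtar i j
      · rw [if_pos hv2, hv2]
      · rw [if_neg hv2]
        refine hz _ _ fun he => ?_
        rcases edge_dest he with ⟨h', rfl⟩ | h'
        · exact h h'
        · exact hv2 h'
    rw [Finset.sum_congr rfl fun v _ => key v,
      Finset.sum_ite_eq' Finset.univ, if_pos (Finset.mem_univ _), zero_add]

theorem sum_in (hz : ∀ u v, ¬ IsEdge n m u v → f u v = 0) (i : Fin n) (j : Fin (m + 1)) :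
    ∑ v, f v (some (i, j)) =
      (if _ : 0 < (j : ℕ) then
        f (some (i, ⟨(j : ℕ) - 1, lt_of_le_of_lt (Nat.sub_le _ _) j.isLt⟩)) (some (i, j)) else 0)
      + (if h : 0 < (i : ℕ) then
        f (some (⟨(i : ℕ) - 1, by have := i.isLt; omega⟩, j)) (some (i, j)) else 0) := by
  set A : Vtx n m := if _ : 0 < (j : ℕ) then
      some (i, ⟨(j : ℕ) - 1, lt_of_le_of_lt (Nat.sub_le _ _) j.isLt⟩) else none with hA
  set B : Vtx n m := if h : 0 < (i : ℕ) then
      some (⟨(i : ℕ) - 1, by have := i.isLt; omega⟩, j) else none with hB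
  have hfnone : ∀ w : Vtx n m, f none w = 0 := fun w => hz none w (by simp [IsEdge])
  have hAB : ∀ g : Vtx n m → ℝ, (if _ : 0 < (j : ℕ) then
        g (some (i, ⟨(j : ℕ) - 1, lt_of_le_of_lt (Nat.sub_le _ _) j.isLt⟩)) else 0)
      = if 0 < (j : ℕ) then g A else 0 := by
    intro g
    by_cases hj : 0 < (j : ℕ) <;> simp [hA, hj]
  have hAB2 : ∀ g : Vtx n m → ℝ, (if _ : 0 < (i : ℕ) then
        g (some (⟨(i : ℕ) - 1, by have := i.isLt; omega⟩, j)) else 0)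
      = if 0 < (i : ℕ) then g B else 0 := by
    intro g
    by_cases hi : 0 < (i : ℕ) <;> simp [hB, hi]
  rw [hAB fun w => f w (some (i, j)), hAB2 fun w => f w (some (i, j))]
  have hAneB : 0 < (j : ℕ) → 0 < (i : ℕ) → A ≠ B := by
    intro hj hi
    rw [hA, hB, dif_pos hj, dif_pos hi]
    simp only [ne_eq, Option.some.injEq, Prod.mk.injEq, not_and]
    intro hc
    exfalso
    rw [Fin.ext_iff] at hc
    simp at hc
    omega
  have key : ∀ v, f v (some (i, j)) =
      (if 0 < (j : ℕ) then (if v = A then f A (some (i, j)) else 0) else 0)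
      + (if 0 < (i : ℕ) then (if v = B then f B (some (i, j)) else 0) else 0) := by
    intro v
    by_cases hj : 0 < (j : ℕ) <;> by_cases hi : 0 < (i : ℕ)
    · rw [if_pos hj, if_pos hi]
      by_cases hv1 : v = A
      · rw [if_pos hv1, if_neg (by rw [hv1]; exact hAneB hj hi), hv1, add_zero]
      · rw [if_neg hv1]
        by_cases hv2 : v = B
        · rw [if_pos hv2, hv2, zero_add]
        · rw [if_neg hv2, add_zero]
          refine hz _ _ fun he => ?_
          rcases edge_src he with ⟨h', rfl⟩ | ⟨h', rfl⟩
          · exact hv1 (by rw [hA, dif_pos hj])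
          · exact hv2 (by rw [hB, dif_pos hi])
    · rw [if_pos hj, if_neg hi, add_zero]
      by_cases hv1 : v = A
      · rw [if_pos hv1, hv1]
      · rw [if_neg hv1]
        refine hz _ _ fun he => ?_
        rcases edge_src he with ⟨h', rfl⟩ | ⟨h', rfl⟩
        · exact hv1 (by rw [hA, dif_pos hj])
        · exact hi h'
    · rw [if_neg hj, if_pos hi, zero_add]
      by_cases hv2 : v = B
      · rw [if_pos hv2, hv2]
      · rw [if_neg hv2]
        refine hz _ _ fun he => ?_
        rcases edge_src he with ⟨h', rfl⟩ | ⟨h', rfl⟩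
        · exact hj h'
        · exact hv2 (by rw [hB, dif_pos hi])
    · rw [if_neg hj, if_neg hi, add_zero]
      refine hz _ _ fun he => ?_
      rcases edge_src he with ⟨h', rfl⟩ | ⟨h', rfl⟩
      · exact hj h'
      · exact hi h'
  rw [Finset.sum_congr rfl fun v _ => key v, Finset.sum_add_distrib]
  congr 1
  · by_cases hj : 0 < (j : ℕ)
    · rw [if_pos hj]
      rw [Finset.sum_congr rfl fun v _ => if_pos hj,
        Finset.sum_ite_eq' Finset.univ, if_pos (Finset.mem_univ _)]
    · rw [if_neg hj]
      rw [Finset.sum_congr rfl fun v _ => if_neg hj, Finset.sum_const_zero]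
  · by_cases hi : 0 < (i : ℕ)
    · rw [if_pos hi]
      rw [Finset.sum_congr rfl fun v _ => if_pos hi,
        Finset.sum_ite_eq' Finset.univ, if_pos (Finset.mem_univ _)]
    · rw [if_neg hi]
      rw [Finset.sum_congr rfl fun v _ => if_neg hi, Finset.sum_const_zero]

theorem sum_in_none (hz : ∀ u v, ¬ IsEdge n m u v → f u v = 0) (hn : 0 < n) :
    ∑ v, f v (none : Vtx n m) =
      ∑ j : Fin (m + 1), f (some (⟨n - 1, by omega⟩, j)) none := by
  have key : ∀ v, f v (none : Vtx n m) =
      ∑ j : Fin (m + 1), if v = some (⟨n - 1, by omega⟩, j) then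
        f (some (⟨n - 1, by omega⟩, j)) none else 0 := by
    intro v
    match v with
    | none =>
      rw [hz none none (by simp [IsEdge])]
      rw [Finset.sum_congr rfl fun j _ => if_neg (by simp)]
      simp
    | some (i', j') =>
      by_cases hi' : (i' : ℕ) = n - 1
      · have hi'' : (⟨n - 1, by omega⟩ : Fin n) = i' := Fin.ext hi'.symm
        rw [Finset.sum_eq_single j']
        · rw [if_pos (by rw [hi'']), hi'']
        · intro w _ hw
          rw [if_neg ?_]
          simp only [Option.some.injEq, Prod.mk.injEq, not_and]
          intro _ h2
          exact hw h2.symm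
        · intro hw
          exact absurd (Finset.mem_univ j') hw
      · rw [hz _ _ (by show ¬ (i' : ℕ) = n - 1; exact hi')]
        rw [Finset.sum_congr rfl fun j _ => if_neg ?_]
        · simp
        · simp only [ne_eq, Option.some.injEq, Prod.mk.injEq, not_and]
          intro hc
          exact absurd (congrArg Fin.val hc) hi'
  rw [Finset.sum_congr rfl fun v _ => key v, Finset.sum_comm]
  refine Finset.sum_congr rfl fun j _ => ?_
  rw [Finset.sum_ite_eq' Finset.univ, if_pos (Finset.mem_univ _)]
section Psi

variable {m : ℕ} (c : ℕ → Fin n → ℕ)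

theorem Psi_some (i : Fin n) (j : Fin (m + 1)) (v : Vtx n m) :
    Psi c (some (i, j)) v =
      (if ∃ h : (j : ℕ) + 1 < m + 1, v = some (i, ⟨(j : ℕ) + 1, h⟩) then
        (c ((j : ℕ) + 1) i : ℝ) else 0)
      + (if v = vtar i j then dval c i (j : ℕ) else 0) := rfl

theorem Psi_zero_off : ∀ u v, ¬ IsEdge n m u v → Psi c u v = 0 := by
  intro u v huv
  match u with
  | none => rfl
  | some (i, j) =>
    rw [Psi_some]
    rw [if_neg, if_neg, add_zero]
    · intro hv
      exact huv (hv ▸ isEdge_vtar i j)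
    · rintro ⟨h', rfl⟩
      exact huv (isEdge_htar i j h')

theorem Psi_at_htar (i : Fin n) (j : Fin (m + 1)) (h : (j : ℕ) + 1 < m + 1) :
    Psi c (some (i, j)) (some (i, ⟨(j : ℕ) + 1, h⟩)) = (c ((j : ℕ) + 1) i : ℝ) := by
  rw [Psi_some, if_pos ⟨h, rfl⟩, if_neg (htar_ne_vtar i j h), add_zero]

theorem Psi_at_vtar (i : Fin n) (j : Fin (m + 1)) :
    Psi c (some (i, j)) (vtar i j) = dval c i (j : ℕ) := by
  rw [Psi_some, if_neg, if_pos rfl, zero_add]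
  rintro ⟨h', hv⟩
  exact htar_ne_vtar i j h' hv.symm

theorem Psi_in_h' (i : Fin n) (j' j : Fin (m + 1)) (hjj : (j : ℕ) = (j' : ℕ) + 1) :
    Psi c (some (i, j')) (some (i, j)) = (c ((j : ℕ)) i : ℝ) := by
  have h1 : (j' : ℕ) + 1 < m + 1 := by rw [← hjj]; exact j.isLt
  have hje : (some (i, j) : Vtx n m) = some (i, ⟨(j' : ℕ) + 1, h1⟩) :=
    congrArg (fun t => some (i, t)) (Fin.ext hjj)
  have hne : ¬ (some (i, j) : Vtx n m) = vtar i j' := by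
    unfold vtar
    split_ifs with h2
    · simp only [Option.some.injEq, Prod.mk.injEq, not_and]
      intro hc2
      exfalso
      have h3 := congrArg Fin.val hc2
      simp at h3
    · simp
  rw [Psi_some, if_pos ⟨h1, hje⟩, if_neg hne, add_zero, hjj]

theorem Psi_in_v' (i' i : Fin n) (j : Fin (m + 1)) (hii : (i : ℕ) = (i' : ℕ) + 1) :
    Psi c (some (i', j)) (some (i, j))
      = (psum (c (j : ℕ)) (i : ℕ) : ℝ) - psum (c ((j : ℕ) + 1)) (i : ℕ) := by
  have h1 : (i' : ℕ) + 1 < n := by rw [← hii]; exact i.isLt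
  have hvt : vtar i' j = some (i, j) := by
    unfold vtar
    rw [dif_pos h1]
    exact congrArg (fun t => (some (t, j) : Vtx n m)) (Fin.ext hii.symm)
  have hne : ¬ ∃ h' : (j : ℕ) + 1 < m + 1, (some (i, j) : Vtx n m)
      = some (i', ⟨(j : ℕ) + 1, h'⟩) := by
    rintro ⟨h', hv⟩
    rw [Option.some.injEq, Prod.mk.injEq] at hv
    have h3 := congrArg Fin.val hv.2
    simp at h3
  rw [Psi_some, if_neg hne, if_pos hvt.symm, zero_add]
  show (psum (c (j : ℕ)) ((i' : ℕ) + 1) : ℝ) - psum (c ((j : ℕ) + 1)) ((i' : ℕ) + 1) = _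
  rw [← hii]

theorem Psi_mem (hn : 0 < n) (hm : 0 < m) (a b : Fin n → ℕ)
    (hc : c ∈ Chains a (m + 1) b) :
    Psi (m := m) c ∈ FlowPolytope n m a b ∧ IsIntegerFlow (Psi (m := m) c) ∧
      IsUnsplittable n m a b (Psi (m := m) c) := by
  obtain ⟨hc0, hcT, hcp⟩ := hc
  have hb : c (m + 1) = b := hcp (m + 1) le_rfl
  have hz := Psi_zero_off (m := m) c
  have hnonneg : ∀ u v : Vtx n m, 0 ≤ Psi c u v := by
    intro u v
    match u with
    | none => exact le_refl 0
    | some (i, j) =>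
      rw [Psi_some]
      refine add_nonneg ?_ ?_
      · split_ifs
        · positivity
        · exact le_refl 0
      · split_ifs
        · unfold dval
          rw [sub_nonneg, Nat.cast_le]
          exact (hcT (j : ℕ)).1 ((i : ℕ) + 1)
        · exact le_refl 0
  have hcons : ∀ u : Vtx n m, (∑ v, Psi c u v) - (∑ v, Psi c v u) = netflow n m a b u := by
    intro u
    match u with
    | none =>
      have hout : ∀ v, Psi (m := m) c none v = 0 := fun _ => rfl
      rw [Finset.sum_congr rfl fun v _ => hout v, Finset.sum_const_zero,
        sum_in_none hz hn]
      have hval : ∀ j : Fin (m + 1), Psi c (some (⟨n - 1, by omega⟩, j)) none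
          = (psum (c (j : ℕ)) n : ℝ) - psum (c ((j : ℕ) + 1)) n := by
        intro j
        rw [Psi_some, if_neg, if_pos, zero_add]
        · show (psum (c (j : ℕ)) ((n - 1) + 1) : ℝ) - psum (c ((j : ℕ) + 1)) ((n - 1) + 1)
            = (psum (c (j : ℕ)) n : ℝ) - psum (c ((j : ℕ) + 1)) n
          rw [show n - 1 + 1 = n by omega]
        · unfold vtar
          rw [dif_neg (by show ¬ (n - 1) + 1 < n; omega)]
        · rintro ⟨h', hv⟩
          cases hv
      rw [Finset.sum_congr rfl fun j _ => hval j]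
      rw [Fin.sum_univ_eq_sum_range
        (fun t => (psum (c t) n : ℝ) - psum (c (t + 1)) n) (m + 1)]
      rw [Finset.sum_range_sub' (fun t => (psum (c t) n : ℝ))]
      show 0 - ((psum (c 0) n : ℝ) - psum (c (m + 1)) n)
        = -∑ i : Fin n, ((a i : ℝ) - (b i : ℝ))
      rw [hc0, hb, psum_total, psum_total, Finset.sum_sub_distrib]
      push_cast
      ring
    | some (i, j) =>
      rw [sum_out hz i j, sum_in hz i j, Psi_at_vtar]
      have hHout : (if h : (j : ℕ) + 1 < m + 1 then
          Psi c (some (i, j)) (some (i, ⟨(j : ℕ) + 1, h⟩)) else 0)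
          = if (j : ℕ) < m then (c ((j : ℕ) + 1) i : ℝ) else 0 := by
        by_cases h : (j : ℕ) + 1 < m + 1
        · rw [dif_pos h, Psi_at_htar, if_pos (by omega)]
        · rw [dif_neg h, if_neg (by omega)]
      have hHin : (if _ : 0 < (j : ℕ) then
          Psi c (some (i, ⟨(j : ℕ) - 1, lt_of_le_of_lt (Nat.sub_le _ _) j.isLt⟩))
            (some (i, j)) else 0)
          = if 0 < (j : ℕ) then (c (j : ℕ) i : ℝ) else 0 := by
        by_cases h : 0 < (j : ℕ)
        · rw [dif_pos h, Psi_in_h' c i ⟨(j : ℕ) - 1, lt_of_le_of_lt (Nat.sub_le _ _) j.isLt⟩ j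
            (by simp; omega), if_pos h]
        · rw [dif_neg h, if_neg h]
      have hVin : (if _ : 0 < (i : ℕ) then
          Psi c (some (⟨(i : ℕ) - 1, by have := i.isLt; omega⟩, j)) (some (i, j)) else 0)
          = (psum (c (j : ℕ)) (i : ℕ) : ℝ) - psum (c ((j : ℕ) + 1)) (i : ℕ) := by
        by_cases h : 0 < (i : ℕ)
        · rw [dif_pos h, Psi_in_v' c ⟨(i : ℕ) - 1, by have := i.isLt; omega⟩ i j
            (by simp; omega)]
        · rw [dif_neg h]
          rw [show (i : ℕ) = 0 by omega, psum_zero, psum_zero]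
          norm_num
      rw [hHout, hHin, hVin]
      show _ = (if (j : ℕ) = 0 then (a i : ℝ) else 0) - (if (j : ℕ) = m then (b i : ℝ) else 0)
      unfold dval
      rw [psum_succ (c (j : ℕ)) i.isLt, psum_succ (c ((j : ℕ) + 1)) i.isLt]
      simp only [Fin.eta]
      by_cases hj0 : (j : ℕ) = 0
      · rw [hj0, hc0]
        rw [if_pos (show (0 : ℕ) < m from hm), if_neg (show ¬ (0 : ℕ) < 0 by omega),
          if_pos (rfl : (0 : ℕ) = 0), if_neg (show ¬ (0 : ℕ) = m by omega)]
        push_cast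
        ring
      · by_cases hjm : (j : ℕ) = m
        · rw [hjm, hb]
          rw [if_neg (show ¬ m < m by omega), if_pos (show 0 < m from hm),
            if_neg (show ¬ m = 0 by omega), if_pos (rfl : m = m)]
          push_cast
          ring
        · have h5 : (j : ℕ) < m := by have := j.isLt; omega
          rw [if_pos h5, if_pos (show 0 < (j : ℕ) by omega), if_neg hj0, if_neg hjm]
          push_cast
          ring
  refine ⟨⟨hz, hnonneg, hcons⟩, ?_, ?_, ?_⟩
  · intro u v
    match u with
    | none => exact ⟨0, by rw [Int.cast_zero]; rfl⟩
    | some (i, j) =>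
      refine ⟨(if ∃ h : (j : ℕ) + 1 < m + 1, v = some (i, ⟨(j : ℕ) + 1, h⟩) then
        (c ((j : ℕ) + 1) i : ℤ) else 0)
        + (if v = vtar i j then ((psum (c (j : ℕ)) ((i : ℕ) + 1) : ℤ)
            - psum (c ((j : ℕ) + 1)) ((i : ℕ) + 1)) else 0), ?_⟩
      rw [Psi_some]
      unfold dval
      split_ifs <;> push_cast <;> ring
  · intro u v w hv hw
    match u with
    | none =>
      have h0 : Psi (m := m) c none v = 0 := rfl
      rw [h0] at hv
      exact absurd hv (lt_irrefl 0)
    | some (i, j) =>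
      have hkey : ∀ v', 0 < Psi c (some (i, j)) v' →
          (∃ h' : (j : ℕ) + 1 < m + 1, v' = some (i, ⟨(j : ℕ) + 1, h'⟩)) ∨ v' = vtar i j := by
        intro v' hpos
        by_contra hcon
        push_neg at hcon
        rw [Psi_some, if_neg (not_exists.mpr hcon.1), if_neg hcon.2, add_zero] at hpos
        exact absurd hpos (lt_irrefl 0)
      have hcontra : ∀ h1 : (j : ℕ) + 1 < m + 1,
          0 < Psi c (some (i, j)) (some (i, ⟨(j : ℕ) + 1, h1⟩)) →
          0 < Psi c (some (i, j)) (vtar i j) → False := by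
        intro h1 hpos1 hpos2
        rw [Psi_at_htar] at hpos1
        have hne : c ((j : ℕ) + 1) i ≠ 0 := by exact_mod_cast hpos1.ne'
        have heq := (hcT (j : ℕ)).2 i hne
        rw [Psi_at_vtar] at hpos2
        unfold dval at hpos2
        rw [heq] at hpos2
        simp at hpos2
      rcases hkey v hv with ⟨h1, rfl⟩ | rfl
      · rcases hkey w hw with ⟨h2, rfl⟩ | rfl
        · rfl
        · exact absurd (hcontra h1 hv hw) not_false
      · rcases hkey w hw with ⟨h2, rfl⟩ | rfl
        · exact absurd (hcontra h2 hw hv) not_false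
        · rfl
  · intro u hneg v
    match u with
    | none => rfl
    | some (i, j) =>
      have hnf : netflow n m a b (some (i, j)) =
          (if (j : ℕ) = 0 then (a i : ℝ) else 0)
          - (if (j : ℕ) = m then (b i : ℝ) else 0) := rfl
      rw [hnf] at hneg
      have hjm : (j : ℕ) = m ∧ b i ≠ 0 := by
        by_cases h1 : (j : ℕ) = m
        · refine ⟨h1, ?_⟩
          intro hbz
          rw [if_pos h1, hbz] at hneg
          split_ifs at hneg with h2
          · rw [Nat.cast_zero, sub_zero] at hneg
            exact absurd hneg (not_lt.2 (Nat.cast_nonneg _))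
          · norm_num at hneg
        · rw [if_neg h1, sub_zero] at hneg
          split_ifs at hneg with h2
          · exact absurd hneg (not_lt.2 (Nat.cast_nonneg _))
          · exact absurd hneg (lt_irrefl (0 : ℝ))
      have hne1 : ¬ ∃ h' : (j : ℕ) + 1 < m + 1, v = some (i, ⟨(j : ℕ) + 1, h'⟩) := by
        rintro ⟨h', _⟩
        rw [hjm.1] at h'
        omega
      have heq : dval c i (j : ℕ) = 0 := by
        have hbne : c (m + 1) i ≠ 0 := by rw [hb]; exact hjm.2
        have heq2 := (hcT m).2 i hbne
        unfold dval
        rw [hjm.1, heq2, sub_self]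
      rw [Psi_some, if_neg hne1, heq, zero_add]
      split_ifs <;> rfl


end Psi
section Extract

variable {m : ℕ} {f : Vtx n m → Vtx n m → ℝ}

theorem flow_to_chain (hn : 0 < n) (hm : 0 < m) (a b : Fin n → ℕ)
    (h1 : ∀ u v, ¬ IsEdge n m u v → f u v = 0) (h2 : ∀ u v, 0 ≤ f u v)
    (h3 : ∀ u, (∑ v, f u v) - (∑ v, f v u) = netflow n m a b u)
    (h4 : IsIntegerFlow f) (h5 : IsUnsplittable n m a b f) :
    ∃ c ∈ Chains a (m + 1) b, f = Psi (m := m) c := by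
  classical
  set cf : ℕ → Fin n → ℕ := fun j i => if h : 1 ≤ j ∧ j ≤ m then
      ⌊f (some (i, ⟨j - 1, by omega⟩)) (some (i, ⟨j, by omega⟩))⌋₊
    else if j = 0 then a i else b i with hcfdef
  have hcf0 : cf 0 = a := by
    funext i
    simp only [hcfdef]
    norm_num
  have hcfb : ∀ j, m + 1 ≤ j → cf j = b := by
    intro j hj
    funext i
    simp only [hcfdef]
    rw [dif_neg (by omega), if_neg (by omega)]
  have hcfm1 : cf (m + 1) = b := hcfb (m + 1) le_rfl
  have hcast : ∀ (j' j : Fin (m + 1)) (i : Fin n), (j : ℕ) = (j' : ℕ) + 1 →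
      (cf (j : ℕ) i : ℝ) = f (some (i, j')) (some (i, j)) := by
    intro j' j i hjj
    have hcond : 1 ≤ (j : ℕ) ∧ (j : ℕ) ≤ m := ⟨by omega, by have := j.isLt; omega⟩
    have hstep : cf (j : ℕ) i =
        ⌊f (some (i, ⟨(j : ℕ) - 1, by omega⟩)) (some (i, ⟨(j : ℕ), by omega⟩))⌋₊ := by
      simp only [hcfdef]
      rw [dif_pos hcond]
    have hv1 : (⟨(j : ℕ) - 1, by omega⟩ : Fin (m + 1)) = j' := Fin.ext (by
      show (j : ℕ) - 1 = (j' : ℕ); omega)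
    have hv2 : (⟨(j : ℕ), by omega⟩ : Fin (m + 1)) = j := Fin.ext rfl
    rw [hstep, hv1, hv2]
    obtain ⟨z, hz⟩ := h4 (some (i, j')) (some (i, j))
    have hz0 : 0 ≤ z := by
      have := h2 (some (i, j')) (some (i, j))
      rw [hz] at this
      exact_mod_cast this
    have hzn : ((z.toNat : ℕ) : ℝ) = (z : ℝ) := by
      rw [← Int.cast_natCast, Int.toNat_of_nonneg hz0]
    rw [hz, ← hzn, Nat.floor_natCast]
  have hD : ∀ (j : Fin (m + 1)) (k : ℕ) (hk : k < n),
      f (some (⟨k, hk⟩, j)) (vtar ⟨k, hk⟩ j)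
        = (psum (cf (j : ℕ)) (k + 1) : ℝ) - psum (cf ((j : ℕ) + 1)) (k + 1) := by
    intro j k
    induction k with
    | zero =>
      intro hk
      set i : Fin n := ⟨0, hk⟩ with hidef
      have hnf : netflow n m a b (some (i, j)) =
          (if (j : ℕ) = 0 then (a i : ℝ) else 0)
          - (if (j : ℕ) = m then (b i : ℝ) else 0) := rfl
      have hHout : (if h : (j : ℕ) + 1 < m + 1 then
          f (some (i, j)) (some (i, ⟨(j : ℕ) + 1, h⟩)) else 0)
          = if (j : ℕ) < m then (cf ((j : ℕ) + 1) i : ℝ) else 0 := by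
        by_cases h : (j : ℕ) + 1 < m + 1
        · rw [dif_pos h, if_pos (by omega)]
          exact (hcast j ⟨(j : ℕ) + 1, h⟩ i rfl).symm
        · rw [dif_neg h, if_neg (by omega)]
      have hHin : (if _ : 0 < (j : ℕ) then
          f (some (i, ⟨(j : ℕ) - 1, lt_of_le_of_lt (Nat.sub_le _ _) j.isLt⟩))
            (some (i, j)) else 0)
          = if 0 < (j : ℕ) then (cf ((j : ℕ)) i : ℝ) else 0 := by
        by_cases h : 0 < (j : ℕ)
        · rw [dif_pos h, if_pos h]
          exact (hcast ⟨(j : ℕ) - 1, lt_of_le_of_lt (Nat.sub_le _ _) j.isLt⟩ j i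
            (by show (j : ℕ) = (j : ℕ) - 1 + 1; omega)).symm
        · rw [dif_neg h, if_neg h]
      have hVin : (if _ : 0 < (i : ℕ) then
          f (some (⟨(i : ℕ) - 1, by have := i.isLt; omega⟩, j)) (some (i, j)) else 0)
          = (psum (cf ((j : ℕ))) ((i : ℕ)) : ℝ) - psum (cf ((j : ℕ) + 1)) ((i : ℕ)) := by
        rw [dif_neg (show ¬ 0 < (i : ℕ) by rw [hidef]; simp)]
        rw [show ((i : ℕ)) = 0 from rfl, psum_zero, psum_zero]
        norm_num
      have heq := h3 (some (i, j))
      rw [sum_out h1 i j, sum_in h1 i j, hHout, hHin, hVin, hnf] at heq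
      rw [psum_succ (cf ((j : ℕ))) hk, psum_succ (cf ((j : ℕ) + 1)) hk]
      by_cases hj0 : (j : ℕ) = 0
      · rw [hj0, hcf0] at heq ⊢
        rw [if_pos (show (0 : ℕ) < m from hm), if_neg (show ¬ (0 : ℕ) < 0 by omega),
          if_pos (rfl : (0 : ℕ) = 0), if_neg (show ¬ (0 : ℕ) = m by omega)] at heq
        push_cast at heq ⊢
        linarith
      · by_cases hjm : (j : ℕ) = m
        · rw [hjm] at heq ⊢
          rw [hcfm1] at heq ⊢
          rw [if_neg (show ¬ m < m by omega), if_pos (show 0 < m from hm),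
            if_neg (show ¬ m = 0 by omega), if_pos (rfl : m = m)] at heq
          push_cast at heq ⊢
          linarith
        · rw [if_pos (show (j : ℕ) < m by have := j.isLt; omega),
            if_pos (show 0 < (j : ℕ) by omega), if_neg hj0, if_neg hjm] at heq
          push_cast at heq ⊢
          linarith
    | succ k ih =>
      intro hk
      have ihk := ih (by omega)
      set i : Fin n := ⟨k + 1, hk⟩ with hidef
      have hnf : netflow n m a b (some (i, j)) =
          (if (j : ℕ) = 0 then (a i : ℝ) else 0)
          - (if (j : ℕ) = m then (b i : ℝ) else 0) := rfl
      have hHout : (if h : (j : ℕ) + 1 < m + 1 then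
          f (some (i, j)) (some (i, ⟨(j : ℕ) + 1, h⟩)) else 0)
          = if (j : ℕ) < m then (cf ((j : ℕ) + 1) i : ℝ) else 0 := by
        by_cases h : (j : ℕ) + 1 < m + 1
        · rw [dif_pos h, if_pos (by omega)]
          exact (hcast j ⟨(j : ℕ) + 1, h⟩ i rfl).symm
        · rw [dif_neg h, if_neg (by omega)]
      have hHin : (if _ : 0 < (j : ℕ) then
          f (some (i, ⟨(j : ℕ) - 1, lt_of_le_of_lt (Nat.sub_le _ _) j.isLt⟩))
            (some (i, j)) else 0)
          = if 0 < (j : ℕ) then (cf ((j : ℕ)) i : ℝ) else 0 := by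
        by_cases h : 0 < (j : ℕ)
        · rw [dif_pos h, if_pos h]
          exact (hcast ⟨(j : ℕ) - 1, lt_of_le_of_lt (Nat.sub_le _ _) j.isLt⟩ j i
            (by show (j : ℕ) = (j : ℕ) - 1 + 1; omega)).symm
        · rw [dif_neg h, if_neg h]
      have hVin : (if _ : 0 < (i : ℕ) then
          f (some (⟨(i : ℕ) - 1, by have := i.isLt; omega⟩, j)) (some (i, j)) else 0)
          = (psum (cf ((j : ℕ))) ((i : ℕ)) : ℝ) - psum (cf ((j : ℕ) + 1)) ((i : ℕ)) := by
        rw [dif_pos (show 0 < (i : ℕ) by rw [hidef]; simp)]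
        have hvt : vtar (⟨(i : ℕ) - 1, by have := i.isLt; omega⟩ : Fin n) j
            = some (i, j) := by
          unfold vtar
          rw [dif_pos (show ((i : ℕ) - 1) + 1 < n by
            have := i.isLt; simp only [hidef]; omega)]
          exact congrArg (fun t => (some (t, j) : Vtx n m)) (Fin.ext (by
            show (i : ℕ) - 1 + 1 = (i : ℕ); simp only [hidef]; omega))
        rw [← hvt]
        exact ihk
      have heq := h3 (some (i, j))
      rw [sum_out h1 i j, sum_in h1 i j, hHout, hHin, hVin, hnf] at heq
      rw [psum_succ (cf ((j : ℕ))) hk, psum_succ (cf ((j : ℕ) + 1)) hk]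
      by_cases hj0 : (j : ℕ) = 0
      · rw [hj0, hcf0] at heq ⊢
        rw [if_pos (show (0 : ℕ) < m from hm), if_neg (show ¬ (0 : ℕ) < 0 by omega),
          if_pos (rfl : (0 : ℕ) = 0), if_neg (show ¬ (0 : ℕ) = m by omega)] at heq
        push_cast at heq ⊢
        linarith
      · by_cases hjm : (j : ℕ) = m
        · rw [hjm] at heq ⊢
          rw [hcfm1] at heq ⊢
          rw [if_neg (show ¬ m < m by omega), if_pos (show 0 < m from hm),
            if_neg (show ¬ m = 0 by omega), if_pos (rfl : m = m)] at heq
          push_cast at heq ⊢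
          linarith
        · rw [if_pos (show (j : ℕ) < m by have := j.isLt; omega),
            if_pos (show 0 < (j : ℕ) by omega), if_neg hj0, if_neg hjm] at heq
          push_cast at heq ⊢
          linarith
  have hD' : ∀ (j : Fin (m + 1)) (i : Fin n),
      f (some (i, j)) (vtar i j)
        = (psum (cf (j : ℕ)) ((i : ℕ) + 1) : ℝ) - psum (cf ((j : ℕ) + 1)) ((i : ℕ) + 1) :=
    fun j i => hD j (i : ℕ) i.isLt
  have hDnat : ∀ (j : Fin (m + 1)) (iN : ℕ),
      psum (cf ((j : ℕ) + 1)) iN ≤ psum (cf ((j : ℕ))) iN := by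
    intro j iN
    have key : ∀ k (hk : k < n), psum (cf ((j : ℕ) + 1)) (k + 1) ≤ psum (cf ((j : ℕ))) (k + 1) := by
      intro k hk
      have hpos := h2 (some (⟨k, hk⟩, j)) (vtar ⟨k, hk⟩ j)
      rw [hD j k hk] at hpos
      rw [sub_nonneg, Nat.cast_le] at hpos
      exact hpos
    by_cases h0 : iN = 0
    · rw [h0, psum_zero, psum_zero]
    · by_cases hn2 : iN ≤ n
      · rw [show iN = (iN - 1) + 1 by omega]
        exact key (iN - 1) (by omega)
      · rw [psum_stab _ (by omega : n ≤ iN), psum_stab _ (by omega : n ≤ iN)]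
        have hkey := key (n - 1) (by omega)
        rwa [show n - 1 + 1 = n by omega] at hkey
  have hchain : ∀ jn : ℕ, T (cf jn) (cf (jn + 1)) := by
    intro jn
    by_cases hj : jn ≤ m
    · set jF : Fin (m + 1) := ⟨jn, by omega⟩ with hjF
      have hjFv : (jF : ℕ) = jn := rfl
      constructor
      · intro iN
        have := hDnat jF iN
        rwa [hjFv] at this
      · intro i hne
        have hzero : f (some (i, jF)) (vtar i jF) = 0 := by
          by_cases hjm' : jn = m
          · have hbne : b i ≠ 0 := by
              have hne2 := hne
              rw [show jn + 1 = m + 1 by omega, hcfm1] at hne2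
              exact hne2
            have hneg : netflow n m a b (some (i, jF)) < 0 := by
              show (if (jF : ℕ) = 0 then (a i : ℝ) else 0)
                - (if (jF : ℕ) = m then (b i : ℝ) else 0) < 0
              rw [hjFv, if_neg (by omega), if_pos hjm']
              have : (0 : ℝ) < (b i : ℝ) := by
                exact_mod_cast Nat.pos_of_ne_zero hbne
              linarith
            exact h5.2 (some (i, jF)) hneg (vtar i jF)
          · have hlt : jn + 1 < m + 1 := by omega
            set jF1 : Fin (m + 1) := ⟨jn + 1, hlt⟩ with hjF1
            have hpos1 : 0 < f (some (i, jF)) (some (i, jF1)) := by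
              rw [← hcast jF jF1 i rfl]
              have : 0 < cf ((jF1 : ℕ)) i := Nat.pos_of_ne_zero hne
              exact_mod_cast this
            by_contra hznz
            have hpos2 : 0 < f (some (i, jF)) (vtar i jF) :=
              lt_of_le_of_ne (h2 _ _) (Ne.symm hznz)
            have := h5.1 (some (i, jF)) (some (i, jF1)) (vtar i jF) hpos1 hpos2
            exact htar_ne_vtar i jF (by rw [hjFv]; exact hlt)
              (by rw [← this])
        have := hD' jF i
        rw [hzero] at this
        have h6 : (psum (cf ((jF : ℕ) + 1)) ((i : ℕ) + 1) : ℝ)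
            = psum (cf ((jF : ℕ))) ((i : ℕ) + 1) := by linarith
        rw [hjFv] at h6
        exact_mod_cast h6
    · rw [hcfb jn (by omega), hcfb (jn + 1) (by omega)]
      exact T_refl b
  refine ⟨cf, ⟨hcf0, hchain, hcfb⟩, ?_⟩
  funext u v
  match u with
  | none =>
    have : Psi (m := m) cf none v = 0 := rfl
    rw [this]
    exact h1 none v (by simp [IsEdge])
  | some (i, j) =>
    by_cases hv1 : ∃ h' : (j : ℕ) + 1 < m + 1, v = some (i, ⟨(j : ℕ) + 1, h'⟩)
    · obtain ⟨h', rfl⟩ := hv1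
      rw [Psi_at_htar]
      exact (hcast j ⟨(j : ℕ) + 1, h'⟩ i rfl).symm
    · by_cases hv2 : v = vtar i j
      · rw [hv2, Psi_at_vtar]
        exact hD' j i
      · rw [Psi_some, if_neg hv1, if_neg hv2, add_zero]
        refine h1 _ _ fun he => ?_
        rcases edge_dest he with h' | h'
        · exact hv1 h'
        · exact hv2 h'

end Extract


end Flow

theorem Psi_injOn {m : ℕ} (a b : Fin n → ℕ) :
    Set.InjOn (Psi (m := m)) (Chains a (m + 1) b) := by
  intro c1 h1 c2 h2 heq
  funext jn i
  by_cases hj0 : jn = 0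
  · rw [hj0, h1.1, h2.1]
  · by_cases hjb : m + 1 ≤ jn
    · rw [h1.2.2 jn hjb, h2.2.2 jn hjb]
    · have hjm : 1 ≤ jn ∧ jn ≤ m := by omega
      set jF' : Fin (m + 1) := ⟨jn - 1, by omega⟩ with hjF'
      set jF : Fin (m + 1) := ⟨jn, by omega⟩ with hjF
      have hjj : (jF : ℕ) = (jF' : ℕ) + 1 := by
        show jn = (jn - 1) + 1
        omega
      have hv := congrFun (congrFun heq (some (i, jF'))) (some (i, jF))
      rw [Psi_in_h' c1 i jF' jF hjj, Psi_in_h' c2 i jF' jF hjj] at hv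
      exact_mod_cast hv

theorem vUnsplit_eq {m : ℕ} (hn : 0 < n) (hm : 0 < m) (a b : Fin n → ℕ) :
    vUnsplit n m a b = (Chains a (m + 1) b).ncard := by
  unfold vUnsplit
  have hset : {f | f ∈ FlowPolytope n m a b ∧ IsIntegerFlow f ∧ IsUnsplittable n m a b f}
      = Psi (m := m) '' Chains a (m + 1) b := by
    ext f
    constructor
    · rintro ⟨hf1, hf2, hf3⟩
      obtain ⟨hz, hpos, hcons⟩ := hf1
      obtain ⟨c, hc, hfc⟩ := flow_to_chain hn hm a b hz hpos hcons hf2 hf3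
      exact ⟨c, hc, hfc.symm⟩
    · rintro ⟨c, hc, rfl⟩
      exact Psi_mem c hn hm a b hc
  rw [hset, Set.ncard_image_of_injOn (Psi_injOn a b)]

end Aux

end GPS
namespace GPS

/-- For fixed `n`, `a`, `b`, the function
`m ↦ v_unsplit^{(n,m)}(a,b)` is a polynomial in `m` of degree at most `2^n - 1`. -/
theorem statement15 (n : ℕ) (hn : 0 < n) (a b : Fin n → ℕ) :
    ∃ p : Polynomial ℚ, p.natDegree ≤ 2 ^ n - 1 ∧
      ∀ m : ℕ, 0 < m → (vUnsplit n m a b : ℚ) = p.eval (m : ℚ) := by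
  obtain ⟨p, hdeg, hp⟩ := Aux.chains_poly a b
  refine ⟨p.comp (Polynomial.X + 1), ?_, ?_⟩
  · have h1 : (Polynomial.X + 1 : Polynomial ℚ).natDegree = 1 := by
      rw [show (1 : Polynomial ℚ) = Polynomial.C 1 from (map_one Polynomial.C).symm]
      exact Polynomial.natDegree_X_add_C 1
    rw [Polynomial.natDegree_comp, h1, mul_one]
    exact hdeg
  · intro m hm
    rw [Polynomial.eval_comp, Polynomial.eval_add, Polynomial.eval_X, Polynomial.eval_one]
    have h2 := hp (m + 1)
    push_cast at h2
    rw [Aux.vUnsplit_eq hn hm a b]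
    exact_mod_cast h2

end GPS
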